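/- Fix a field k. Every simple smooth k[I]-module is isomorphic, as a k[I]-module, to B^n for some n ∈ ℕ. (In particular, every simple smooth k[I]-module is one-dimensional over k.) -/

import Mathlib

open scoped Classical

noncomputable section

/-- The increasing monoid `I`: the submonoid of `Function.End ℕ+` (functions under
composition) consisting of strictly increasing functions `σ : ℕ+ → ℕ+` such that
`σ n = n + ℓ` for some `ℓ` and all sufficiently large `n`. -/
def IncMonoid : Submonoid (Function.End ℕ+) where
  carrier := {f | StrictMono f ∧ ∃ (l : ℕ) (N : ℕ+), ∀ n : ℕ+, N ≤ n → ((f n : ℕ) = (n : ℕ) + l)}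
  one_mem' := ⟨fun _ _ h => h, 0, 1, fun n _ => by show ((n : ℕ+) : ℕ) = (n : ℕ) + 0; omega⟩
  mul_mem' := by
    rintro f g ⟨hf1, lf, Nf, hf2⟩ ⟨hg1, lg, Ng, hg2⟩
    refine ⟨hf1.comp hg1, lg + lf, max Nf Ng, fun n hn => ?_⟩
    have h1 : (g n : ℕ) = (n : ℕ) + lg := hg2 n (le_trans (le_max_right _ _) hn)
    have h2 : Nf ≤ g n := by
      rw [← PNat.coe_le_coe, h1]
      have : (Nf : ℕ) ≤ (n : ℕ) := (PNat.coe_le_coe _ _).2 (le_trans (le_max_left _ _) hn)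
      omega
    have h3 := hf2 (g n) h2
    show ((f (g n) : ℕ)) = (n : ℕ) + (lg + lf)
    omega

/-- The increasing monoid, as a type. -/
abbrev IncM : Type := IncMonoid

theorem IncM.strictMono (σ : IncM) : StrictMono σ.1 := σ.2.1

theorem IncM.le_apply (σ : IncM) (n : ℕ+) : n ≤ σ.1 n := by
  induction n using PNat.recOn with
  | one => exact (σ.1 1).one_le
  | succ n ih =>
      have h2 : σ.1 n < σ.1 (n + 1) := σ.strictMono (by rw [← PNat.coe_lt_coe]; push_cast; omega)
      rw [← PNat.coe_le_coe] at *
      rw [← PNat.coe_lt_coe] at h2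
      push_cast at *
      omega

/-- The underlying function of the generator `α_k`. -/
def alphaFun (k : ℕ+) : Function.End ℕ+ := fun n => if n < k then n else n + 1

theorem alphaFun_strictMono (k : ℕ+) : StrictMono (alphaFun k) := by
  intro a b hab
  unfold alphaFun
  split_ifs with h1 h2 <;>
    rw [← PNat.coe_lt_coe] at * <;> push_cast at * <;> omega

theorem alphaFun_mem (k : ℕ+) : alphaFun k ∈ IncMonoid := by
  refine ⟨alphaFun_strictMono k, 1, k, fun n hn => ?_⟩
  unfold alphaFun
  rw [if_neg (not_lt.2 hn)]
  push_cast
  ring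

/-- The generator `α_k` of the increasing monoid (`k ≥ 1`). -/
def alpha (k : ℕ+) : IncM := ⟨alphaFun k, alphaFun_mem k⟩

/-- The submonoid `I_{≥ n}` of `I` generated by the `α_i` with `i ≥ n`. -/
def Iges (n : ℕ+) : Submonoid IncM := Submonoid.closure (alpha '' Set.Ici n)

/-- The submonoid `I_{> n}` of `I` generated by the `α_i` with `i > n`. -/
def Igt (n : ℕ) : Submonoid IncM := Submonoid.closure {s | ∃ i : ℕ+, n < (i : ℕ) ∧ s = alpha i}

/-- The monoid algebra `k[I]` of the increasing monoid. -/
abbrev IncAlg (k : Type*) [Field k] : Type _ := MonoidAlgebra k IncM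

/-- The image of `σ ∈ I` in the monoid algebra `k[I]`. -/
abbrev ofInc (k : Type*) [Field k] (σ : IncM) : IncAlg k := MonoidAlgebra.of k IncM σ

/-- A `k[I]`-module is smooth if every vector is fixed by some `I_{>n}`. -/
def IsSmoothMod (k : Type*) [Field k] (M : Type*) [AddCommMonoid M]
    [Module (IncAlg k) M] : Prop :=
  ∀ x : M, ∃ n : ℕ, ∀ σ ∈ Igt n, ofInc k σ • x = x

/-! ### The principal modules `A^r` -/

/-- Index set for the basis of the principal module `A^r`:
strictly increasing `r`-tuples of positive integers. -/
def Idx (r : ℕ) : Type := {v : Fin r → ℕ+ // StrictMono v}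

/-- The action of `σ ∈ I` on the index set of `A^r`. -/
def idxAct {r : ℕ} (σ : IncM) (t : Idx r) : Idx r :=
  ⟨σ.1 ∘ t.1, (IncM.strictMono σ).comp t.2⟩

/-- The representation of the increasing monoid on the principal module `A^r`. -/
def prinRep (k : Type*) [Field k] (r : ℕ) : Representation k IncM (Idx r →₀ k) where
  toFun σ := Finsupp.lmapDomain k k (idxAct σ)
  map_one' := LinearMap.ext fun v => by
    have h : (idxAct (1 : IncM) : Idx r → Idx r) = id := funext fun t => rfl
    simp [Finsupp.lmapDomain_apply, h, Finsupp.mapDomain_id]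
  map_mul' := fun σ τ => LinearMap.ext fun v => by
    have h : (idxAct (σ * τ) : Idx r → Idx r) = (idxAct σ) ∘ (idxAct τ) :=
      funext fun t => rfl
    show Finsupp.lmapDomain k k (idxAct (σ * τ)) v =
      Finsupp.lmapDomain k k (idxAct σ) (Finsupp.lmapDomain k k (idxAct τ) v)
    simp [Finsupp.lmapDomain_apply, h, Finsupp.mapDomain_comp]

/-- The principal module `A^r`, as a module over the monoid algebra `k[I]`. -/
abbrev PrinMod (k : Type*) [Field k] (r : ℕ) : Type _ := (prinRep k r).asModule

/-- The basis vector `e_t` of the principal module `A^r`. -/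
def ePrin (k : Type*) [Field k] {r : ℕ} (t : Idx r) : PrinMod k r :=
  (prinRep k r).asModuleEquiv.symm (Finsupp.single t 1)

/-- The tuple `(1, 2, …, r)` indexing the canonical generator `e_{1,…,r}` of `A^r`. -/
def iotaIdx (r : ℕ) : Idx r :=
  ⟨fun i => ⟨(i : ℕ) + 1, Nat.succ_pos _⟩, fun a b h => by
    exact (PNat.coe_lt_coe _ _).1 (Nat.succ_lt_succ h)⟩

/-! ### The simple modules `B^n` -/

/-- `σ ∈ I` fixes the natural number `n`, with the convention `σ 0 = 0`. -/
def fixesNat (σ : IncM) (n : ℕ) : Prop := ∀ h : 0 < n, σ.1 ⟨n, h⟩ = ⟨n, h⟩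

theorem fixesNat_mul (σ τ : IncM) (n : ℕ) :
    fixesNat (σ * τ) n ↔ fixesNat σ n ∧ fixesNat τ n := by
  rcases Nat.eq_zero_or_pos n with h0 | h0
  · subst h0
    constructor
    · exact fun _ => ⟨fun h => absurd h (lt_irrefl 0), fun h => absurd h (lt_irrefl 0)⟩
    · exact fun _ h => absurd h (lt_irrefl 0)
  · set p : ℕ+ := ⟨n, h0⟩
    have happ : ∀ h : 0 < n, (σ * τ).1 ⟨n, h⟩ = σ.1 (τ.1 ⟨n, h⟩) := fun _ => rfl
    constructor
    · intro h
      have hfix : σ.1 (τ.1 p) = p := h h0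
      have h1 : p ≤ τ.1 p := τ.le_apply p
      have h2 : τ.1 p ≤ σ.1 (τ.1 p) := σ.le_apply _
      have hτp : τ.1 p = p := le_antisymm (h2.trans_eq hfix) h1
      have hσp : σ.1 p = p := by rw [hτp] at hfix; exact hfix
      exact ⟨fun _ => hσp, fun _ => hτp⟩
    · rintro ⟨hσ, hτ⟩ h
      rw [happ h]
      have := hτ h0
      rw [this, hσ h0]

/-- The representation of the increasing monoid on the simple module `B^n`:
`σ` acts by the identity if `σ(n) = n` (with `σ(0) = 0`) and by `0` otherwise. -/
def bRep (k : Type*) [Field k] (n : ℕ) : Representation k IncM k where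
  toFun σ := if fixesNat σ n then 1 else 0
  map_one' := by
    rw [if_pos]
    intro h
    rfl
  map_mul' := fun σ τ => by
    by_cases hσ : fixesNat σ n
    · by_cases hτ : fixesNat τ n
      · rw [if_pos ((fixesNat_mul σ τ n).2 ⟨hσ, hτ⟩), if_pos hσ, if_pos hτ, one_mul]
      · rw [if_neg (fun h => hτ ((fixesNat_mul σ τ n).1 h).2), if_pos hσ, if_neg hτ, one_mul]
    · by_cases hτ : fixesNat τ n
      · rw [if_neg (fun h => hσ ((fixesNat_mul σ τ n).1 h).1), if_neg hσ, if_pos hτ, mul_one]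
      · rw [if_neg (fun h => hσ ((fixesNat_mul σ τ n).1 h).1), if_neg hσ, if_neg hτ, mul_zero]

/-- The simple module `B^n`, as a module over the monoid algebra `k[I]`. -/
abbrev BMod (k : Type*) [Field k] (n : ℕ) : Type _ := (bRep k n).asModule


/-! ### Auxiliary lemmas for the classification -/

section ClassificationAux

open MonoidAlgebra

lemma incm_mul_apply (σ τ : IncM) (p : ℕ+) : (σ * τ : IncM).1 p = σ.1 (τ.1 p) := rfl

lemma incm_one_apply (p : ℕ+) : (1 : IncM).1 p = p := rfl

lemma alpha_apply' (t p : ℕ+) : (alpha t).1 p = if p < t then p else p + 1 := rfl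

lemma alpha_pow_val (t : ℕ+) (c : ℕ) : ∀ p : ℕ+,
    (((alpha t ^ c : IncM)).1 p : ℕ) = if (p:ℕ) < (t:ℕ) then (p:ℕ) else (p:ℕ) + c := by
  induction c with
  | zero =>
      intro p
      rw [pow_zero, incm_one_apply]
      split_ifs <;> omega
  | succ c ih =>
      intro p
      rw [pow_succ, incm_mul_apply, alpha_apply']
      by_cases h : p < t
      · have h' : (p:ℕ) < (t:ℕ) := by exact_mod_cast h
        rw [if_pos h, ih p, if_pos h', if_pos h']
      · have h' : ¬ ((p:ℕ) < (t:ℕ)) := by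
          rw [PNat.coe_lt_coe]; exact h
        rw [if_neg h, ih (p+1), if_neg (by push_cast; omega), if_neg h']
        push_cast
        omega

lemma alpha_pow_small (t : ℕ+) (c : ℕ) (p : ℕ+) (h : (p:ℕ) < (t:ℕ)) :
    ((alpha t ^ c : IncM)).1 p = p :=
  PNat.coe_injective (by rw [alpha_pow_val, if_pos h])

lemma diff_le (σ : IncM) : ∀ (d : ℕ) (p q : ℕ+), (q:ℕ) = (p:ℕ) + d →
    (σ.1 p : ℕ) + d ≤ (σ.1 q : ℕ) := by
  intro d
  induction d with
  | zero =>
      intro p q h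
      have hpq : p = q := PNat.coe_injective (by omega)
      subst hpq; omega
  | succ d ih =>
      intro p q h
      have hq' : (0:ℕ) < (p:ℕ) + d := by have := p.pos; omega
      have h1 := ih p ⟨(p:ℕ) + d, hq'⟩ rfl
      have h2 : σ.1 ⟨(p:ℕ) + d, hq'⟩ < σ.1 q := by
        apply σ.strictMono
        apply (PNat.coe_lt_coe _ _).1
        show (p:ℕ) + d < (q:ℕ)
        omega
      rw [← PNat.coe_lt_coe] at h2
      omega

lemma le_apply_nat (σ : IncM) (p : ℕ+) : (p:ℕ) ≤ (σ.1 p : ℕ) := by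
  exact_mod_cast σ.le_apply p

lemma exists_min_moved (σ : IncM) (p0 : ℕ+) (hp0 : σ.1 p0 ≠ p0) :
    ∃ j0 : ℕ+, σ.1 j0 ≠ j0 ∧ (j0:ℕ) ≤ (p0:ℕ) ∧
      ∀ j : ℕ+, (j:ℕ) < (j0:ℕ) → σ.1 j = j := by
  have hP : ∃ t : ℕ, ∃ h : 0 < t, σ.1 ⟨t, h⟩ ≠ ⟨t, h⟩ := ⟨(p0:ℕ), p0.pos, hp0⟩
  obtain ⟨h0, hmove⟩ := Nat.find_spec hP
  refine ⟨⟨Nat.find hP, h0⟩, hmove, Nat.find_min' hP ⟨p0.pos, hp0⟩, ?_⟩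
  intro j hj
  by_contra hne
  exact Nat.find_min hP hj ⟨j.pos, hne⟩

lemma exists_factor (ρ : IncM) (m : ℕ+) (c : ℕ)
    (h1 : ∀ j : ℕ+, (j:ℕ) < (m:ℕ) → ρ.1 j = j)
    (h2 : (m:ℕ) + c ≤ (ρ.1 m : ℕ)) :
    ∃ τ : IncM, (∀ j : ℕ+, (j:ℕ) < (m:ℕ) → τ.1 j = j) ∧
      (∀ p q : ℕ+, (m:ℕ) ≤ (p:ℕ) → (q:ℕ) = (p:ℕ) + c → τ.1 q = ρ.1 p) ∧
      ρ = τ * (alpha m) ^ c := by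
  classical
  have hmpos := m.pos
  set f : Function.End ℕ+ := fun p =>
    if h : (p:ℕ) < (m:ℕ) + c then p else ρ.1 ⟨(p:ℕ) - c, by omega⟩ with hf
  have fsmall : ∀ p : ℕ+, (p:ℕ) < (m:ℕ) + c → f p = p := fun p hp => dif_pos hp
  have fbig : ∀ p q : ℕ+, (m:ℕ) ≤ (p:ℕ) → (q:ℕ) = (p:ℕ) + c → f q = ρ.1 p := by
    intro p q hp hq
    have hnot : ¬ ((q:ℕ) < (m:ℕ) + c) := by omega
    have : f q = ρ.1 ⟨(q:ℕ) - c, by omega⟩ := dif_neg hnot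
    have harg : (⟨(q:ℕ) - c, by omega⟩ : ℕ+) = p :=
      PNat.coe_injective (by show (q:ℕ) - c = (p:ℕ); omega)
    rw [this, harg]
  -- monotonicity helper: for q ≥ m, ρ q ≥ m + c + (q - m)
  have hbig_val : ∀ p : ℕ+, (m:ℕ) ≤ (p:ℕ) → (m:ℕ) + c + ((p:ℕ) - (m:ℕ)) ≤ (ρ.1 p : ℕ) := by
    intro p hp
    have := diff_le ρ ((p:ℕ) - (m:ℕ)) m p (by omega)
    omega
  have fmono : StrictMono f := by
    intro p q hpq
    have hpq' : (p:ℕ) < (q:ℕ) := by exact_mod_cast hpq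
    by_cases hp : (p:ℕ) < (m:ℕ) + c
    · by_cases hq : (q:ℕ) < (m:ℕ) + c
      · rw [fsmall p hp, fsmall q hq]; exact hpq
      · rw [fsmall p hp]
        have : f q = ρ.1 ⟨(q:ℕ) - c, by omega⟩ := dif_neg hq
        rw [this, ← PNat.coe_lt_coe]
        have h3 := hbig_val ⟨(q:ℕ) - c, by omega⟩ (by show (m:ℕ) ≤ (q:ℕ) - c; omega)
        show (p:ℕ) < _
        omega
    · have hq : ¬ ((q:ℕ) < (m:ℕ) + c) := by omega
      have e1 : f p = ρ.1 ⟨(p:ℕ) - c, by omega⟩ := dif_neg hp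
      have e2 : f q = ρ.1 ⟨(q:ℕ) - c, by omega⟩ := dif_neg hq
      rw [e1, e2]
      apply ρ.strictMono
      apply (PNat.coe_lt_coe _ _).1
      show (p:ℕ) - c < (q:ℕ) - c
      omega
  obtain ⟨l, N, hl⟩ := ρ.2.2
  have hlc : c ≤ l := by
    have hP := hl (m + N) (by rw [← PNat.coe_le_coe]; push_cast; omega)
    have := hbig_val (m + N) (by push_cast; omega)
    push_cast at hP this
    omega
  have fmem : f ∈ IncMonoid := by
    refine ⟨fmono, l - c, ⟨(N:ℕ) + (m:ℕ) + c, by have := N.pos; omega⟩, ?_⟩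
    intro p hp
    replace hp := (PNat.coe_le_coe _ _).2 hp
    have hp' : (N:ℕ) + (m:ℕ) + c ≤ (p:ℕ) := hp
    have e1 : f p = ρ.1 ⟨(p:ℕ) - c, by omega⟩ := dif_neg (by have := N.pos; omega)
    have e2 := hl ⟨(p:ℕ) - c, by omega⟩ (by apply (PNat.coe_le_coe _ _).1; show (N:ℕ) ≤ (p:ℕ) - c; omega)
    rw [e1, e2]
    show (p:ℕ) - c + l = (p:ℕ) + (l - c)
    omega
  refine ⟨⟨f, fmem⟩, ?_, ?_, ?_⟩
  · intro j hj
    exact fsmall j (by omega)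
  · intro p q hp hq
    exact fbig p q hp hq
  · apply Subtype.ext
    funext p
    show ρ.1 p = f ((alpha m ^ c : IncM).1 p)
    by_cases hp : (p:ℕ) < (m:ℕ)
    · rw [alpha_pow_small m c p hp, fsmall p (by omega), h1 p hp]
    · have hval : (((alpha m ^ c : IncM)).1 p : ℕ) = (p:ℕ) + c := by
        rw [alpha_pow_val, if_neg hp]
      rw [fbig p ((alpha m ^ c : IncM).1 p) (by omega) hval]

end ClassificationAux

section ModuleAux

open MonoidAlgebra

variable {k : Type*} [Field k] {M : Type*} [AddCommGroup M] [Module (IncAlg k) M]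

lemma of_mul_smul (σ τ : IncM) (v : M) :
    ofInc k (σ * τ) • v = ofInc k σ • (ofInc k τ • v) := by
  show (MonoidAlgebra.of k IncM (σ * τ)) • v = _
  rw [map_mul, mul_smul]

lemma smul_eq_zero_of_moves (z : M) (n : ℕ)
    (hkill : ∀ j : ℕ+, (j:ℕ) ≤ n → ofInc k (alpha j) • z = 0)
    (σ : IncM) (j1 : ℕ+) (hj1 : (j1:ℕ) ≤ n) (hmv : σ.1 j1 ≠ j1) :
    ofInc k σ • z = 0 := by
  obtain ⟨j0, hne, hle, hmin⟩ := exists_min_moved σ j1 hmv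
  have hgt : (j0:ℕ) < (σ.1 j0 : ℕ) :=
    lt_of_le_of_ne (le_apply_nat σ j0) (fun h => hne (PNat.coe_injective h.symm))
  obtain ⟨τ, -, -, heq⟩ := exists_factor σ j0 1 hmin (by omega)
  rw [heq, pow_one, of_mul_smul, hkill j0 (le_trans hle hj1), smul_zero]

lemma smul_eq_of_fixes (z : M) (n : ℕ)
    (hfix : ∀ j : ℕ+, n < (j:ℕ) → ofInc k (alpha j) • z = z) :
    ∀ (l : ℕ) (σ : IncM) (N : ℕ+), (∀ p : ℕ+, N ≤ p → ((σ.1 p : ℕ) = (p:ℕ) + l)) →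
    (∀ j : ℕ+, (j:ℕ) ≤ n → σ.1 j = j) → ofInc k σ • z = z := by
  intro l
  induction l with
  | zero =>
      intro σ N hshift hσ
      have hσ1 : σ = 1 := by
        apply Subtype.ext; funext p
        have h1 := le_apply_nat σ p
        have h2 := hshift (N + p) (by rw [← PNat.coe_le_coe]; push_cast; omega)
        have h3 := diff_le σ (N:ℕ) p (N + p) (by push_cast; omega)
        push_cast at h2 h3
        have h4 : (σ.1 p : ℕ) = (p:ℕ) := by omega
        show σ.1 p = p
        exact PNat.coe_injective h4
      rw [hσ1]
      show (MonoidAlgebra.of k IncM 1) • z = z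
      rw [map_one, one_smul]
  | succ l ih =>
      intro σ N hshift hσ
      by_cases hid : ∀ p : ℕ+, σ.1 p = p
      · have hσ1 : σ = 1 := Subtype.ext (funext hid)
        rw [hσ1]
        show (MonoidAlgebra.of k IncM 1) • z = z
        rw [map_one, one_smul]
      · push_neg at hid
        obtain ⟨p0, hp0⟩ := hid
        obtain ⟨j0, hne, -, hmin⟩ := exists_min_moved σ p0 hp0
        have hgt : (j0:ℕ) < (σ.1 j0 : ℕ) :=
          lt_of_le_of_ne (le_apply_nat σ j0) (fun h => hne (PNat.coe_injective h.symm))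
        have hgtn : (n:ℕ) < (j0:ℕ) := by
          by_contra hle
          exact hne (hσ j0 (by omega))
        obtain ⟨τ, hτfix, hτbig, heq⟩ := exists_factor σ j0 1 hmin (by omega)
        have hτshift : ∀ q : ℕ+, (N + j0 + 1 : ℕ+) ≤ q → ((τ.1 q : ℕ) = (q:ℕ) + l) := by
          intro q hq
          rw [← PNat.coe_le_coe] at hq
          push_cast at hq
          have hq1 : (0:ℕ) < (q:ℕ) - 1 := by have := N.pos; have := j0.pos; omega
          have hp : τ.1 q = σ.1 ⟨(q:ℕ) - 1, hq1⟩ :=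
            hτbig ⟨(q:ℕ) - 1, hq1⟩ q (by show (j0:ℕ) ≤ (q:ℕ) - 1; omega)
              (by show (q:ℕ) = (q:ℕ) - 1 + 1; omega)
          have hs := hshift ⟨(q:ℕ) - 1, hq1⟩
            (by apply (PNat.coe_le_coe _ _).1; show (N:ℕ) ≤ (q:ℕ) - 1; omega)
          rw [hp, hs]
          show (q:ℕ) - 1 + (l + 1) = (q:ℕ) + l
          omega
        have hτfix' : ∀ j : ℕ+, (j:ℕ) ≤ n → τ.1 j = j := fun j hj =>
          hτfix j (by omega)
        rw [heq, pow_one, of_mul_smul, hfix j0 hgtn]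
        exact ih τ (N + j0 + 1) hτshift hτfix'

lemma smul_congr_of_agree (v : M) (N : ℕ)
    (hv : ∀ j : ℕ+, N < (j:ℕ) → ofInc k (alpha j) • v = v)
    (φ ψ : IncM) (h : ∀ p : ℕ+, (p:ℕ) ≤ N → φ.1 p = ψ.1 p) :
    ofInc k φ • v = ofInc k ψ • v := by
  obtain ⟨lφ, Nφ, hφ⟩ := φ.2.2
  obtain ⟨lψ, Nψ, hψ⟩ := ψ.2.2
  have hNpos : 0 < N + 1 := Nat.succ_pos N
  set t : ℕ+ := ⟨N + 1, hNpos⟩ with ht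
  have htval : (t:ℕ) = N + 1 := rfl
  have hfixpow : ∀ c : ℕ, ofInc k ((alpha t)^c) • v = v := by
    intro c
    induction c with
    | zero =>
        show (MonoidAlgebra.of k IncM (alpha t ^ 0)) • v = v
        rw [pow_zero, map_one, one_smul]
    | succ c ih =>
        rw [pow_succ, of_mul_smul, hv t (by omega), ih]
  set a : ℕ := (Nφ:ℕ) + (Nψ:ℕ) + lψ with ha
  set b : ℕ := (Nφ:ℕ) + (Nψ:ℕ) + lφ with hb
  have key : φ * (alpha t)^a = ψ * (alpha t)^b := by
    apply Subtype.ext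
    funext p
    show φ.1 ((alpha t ^ a : IncM).1 p) = ψ.1 ((alpha t ^ b : IncM).1 p)
    by_cases hp : (p:ℕ) ≤ N
    · rw [alpha_pow_small t a p (by omega), alpha_pow_small t b p (by omega)]
      exact h p hp
    · have hav : (((alpha t ^ a : IncM)).1 p : ℕ) = (p:ℕ) + a := by
        rw [alpha_pow_val, if_neg (by omega)]
      have hbv : (((alpha t ^ b : IncM)).1 p : ℕ) = (p:ℕ) + b := by
        rw [alpha_pow_val, if_neg (by omega)]
      have e1 := hφ ((alpha t ^ a : IncM).1 p)
        (by rw [← PNat.coe_le_coe, hav]; have := Nφ.pos; omega)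
      have e2 := hψ ((alpha t ^ b : IncM).1 p)
        (by rw [← PNat.coe_le_coe, hbv]; have := Nψ.pos; omega)
      apply PNat.coe_injective
      rw [e1, e2, hav, hbv]
      omega
  calc ofInc k φ • v = ofInc k φ • (ofInc k ((alpha t)^a) • v) := by rw [hfixpow]
    _ = ofInc k (φ * (alpha t)^a) • v := (of_mul_smul _ _ _).symm
    _ = ofInc k (ψ * (alpha t)^b) • v := by rw [key]
    _ = ofInc k ψ • (ofInc k ((alpha t)^b) • v) := of_mul_smul _ _ _
    _ = ofInc k ψ • v := by rw [hfixpow]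

lemma sand_zero (g h : IncM) (v : M)
    (hz : ∀ σ : IncM, ofInc k (g * σ * h) • v = 0) (a : IncAlg k) :
    (ofInc k g * a * ofInc k h) • v = 0 := by
  induction a using MonoidAlgebra.induction with
  | zero => simp
  | single_add σ c a hσs hc ih =>
      rw [mul_add, add_mul, add_smul, ih, add_zero]
      have hsingle : (ofInc k g * MonoidAlgebra.single σ c * ofInc k h : IncAlg k)
          = MonoidAlgebra.single (1 : IncM) c * ofInc k (g * σ * h) := by
        simp [MonoidAlgebra.of_apply, MonoidAlgebra.single_mul_single]
      rw [hsingle, mul_smul, hz σ, smul_zero]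

lemma sand_eq (g1 g2 h : IncM) (v : M)
    (hz : ∀ σ : IncM, ofInc k (g1 * σ * h) • v = ofInc k (g2 * σ * h) • v) (a : IncAlg k) :
    (ofInc k g1 * a * ofInc k h) • v = (ofInc k g2 * a * ofInc k h) • v := by
  induction a using MonoidAlgebra.induction with
  | zero => simp
  | single_add σ c a hσs hc ih =>
      rw [mul_add, add_mul, add_smul, mul_add, add_mul, add_smul, ih]
      congr 1
      have hs1 : (ofInc k g1 * MonoidAlgebra.single σ c * ofInc k h : IncAlg k)
          = MonoidAlgebra.single (1 : IncM) c * ofInc k (g1 * σ * h) := by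
        simp [MonoidAlgebra.of_apply, MonoidAlgebra.single_mul_single]
      have hs2 : (ofInc k g2 * MonoidAlgebra.single σ c * ofInc k h : IncAlg k)
          = MonoidAlgebra.single (1 : IncM) c * ofInc k (g2 * σ * h) := by
        simp [MonoidAlgebra.of_apply, MonoidAlgebra.single_mul_single]
      rw [hs1, hs2, mul_smul, mul_smul, hz σ]

lemma exists_smul_eq' (hsimple : IsSimpleModule (IncAlg k) M) (v' : M) (h : v' ≠ 0) (v : M) :
    ∃ a : IncAlg k, a • v' = v := by
  haveI := hsimple
  have hspan : Submodule.span (IncAlg k) {v'} = ⊤ := by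
    rcases eq_bot_or_eq_top (Submodule.span (IncAlg k) {v'}) with hb | ht
    · exfalso
      apply h
      have := Submodule.mem_span_singleton_self (R := IncAlg k) v'
      rw [hb] at this
      simpa using this
    · exact ht
  have hv : v ∈ Submodule.span (IncAlg k) {v'} := by rw [hspan]; trivial
  exact Submodule.mem_span_singleton.mp hv

lemma exists_eigenvector (hsm : IsSmoothMod k M) (hsimple : IsSimpleModule (IncAlg k) M) :
    ∃ (n : ℕ) (z : M), z ≠ 0 ∧ (∀ j : ℕ+, (j:ℕ) ≤ n → ofInc k (alpha j) • z = 0) ∧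
      (∀ j : ℕ+, n < (j:ℕ) → ofInc k (alpha j) • z = z) := by
  haveI := hsimple
  have hne : ∃ v : M, v ≠ 0 := by
    haveI : Nontrivial M := IsSimpleModule.nontrivial (R := IncAlg k) (M := M)
    exact exists_ne 0
  obtain ⟨v0, hv0⟩ := hne
  obtain ⟨N0, hN0⟩ := hsm v0
  have hv0fix : ∀ j : ℕ+, N0 < (j:ℕ) → ofInc k (alpha j) • v0 = v0 := fun j hj =>
    hN0 (alpha j) (Submonoid.subset_closure ⟨j, hj, rfl⟩)
  suffices aux : ∀ (d : ℕ) (m : ℕ+) (N : ℕ) (v : M), v ≠ 0 →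
      N + 1 ≤ (m:ℕ) + d →
      (∀ j : ℕ+, (j:ℕ) < (m:ℕ) → ofInc k (alpha j) • v = 0) →
      (∀ j : ℕ+, N < (j:ℕ) → ofInc k (alpha j) • v = v) →
      ∃ (n : ℕ) (z : M), z ≠ 0 ∧ (∀ j : ℕ+, (j:ℕ) ≤ n → ofInc k (alpha j) • z = 0) ∧
        (∀ j : ℕ+, n < (j:ℕ) → ofInc k (alpha j) • z = z) by
    refine aux (N0 + 1) 1 N0 v0 hv0 (by have : ((1:ℕ+):ℕ) = 1 := rfl; omega)
      (fun j hj => ?_) hv0fix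
    exfalso
    have h1 : ((1:ℕ+):ℕ) = 1 := rfl
    have := j.pos
    omega
  intro d
  induction d with
  | zero =>
      intro m N v hv hb hkill hfix
      refine ⟨(m:ℕ) - 1, v, hv, ?_, ?_⟩
      · intro j hj
        exact hkill j (by have := m.pos; omega)
      · intro j hj
        exact hfix j (by have := m.pos; omega)
  | succ d ih =>
      intro m N v hv hb hkill hfix
      by_cases hcase : N + 1 ≤ (m:ℕ)
      · refine ⟨(m:ℕ) - 1, v, hv, ?_, ?_⟩
        · intro j hj
          exact hkill j (by have := m.pos; omega)
        · intro j hj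
          exact hfix j (by have := m.pos; omega)
      · push_neg at hcase
        by_cases h0 : ofInc k (alpha m) • v = 0
        · apply ih (m+1) N v hv (by push_cast; omega) _ hfix
          intro j hj
          have hj' : (j:ℕ) < (m:ℕ) + 1 := by
            push_cast at hj
            omega
          by_cases hjm : (j:ℕ) < (m:ℕ)
          · exact hkill j hjm
          · have : j = m := PNat.coe_injective (by omega)
            rw [this]
            exact h0
        · -- alpha m • v ≠ 0 : show all powers of alpha m act nontrivially
          have hpow : ∀ c : ℕ, ofInc k ((alpha m)^c) • v ≠ 0 := by
            intro c
            induction c with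
            | zero =>
                show (MonoidAlgebra.of k IncM (alpha m ^ 0)) • v ≠ 0
                rw [pow_zero, map_one, one_smul]
                exact hv
            | succ c ihc =>
                intro hzero
                rcases Nat.eq_zero_or_pos c with hc0 | hc1
                · subst hc0
                  rw [pow_one] at hzero
                  exact h0 hzero
                · set v' := ofInc k ((alpha m)^c) • v with hv'
                  obtain ⟨a, haa⟩ := exists_smul_eq' hsimple v' ihc v
                  have hvv : (ofInc k ((alpha m)^c) * a * ofInc k ((alpha m)^c)) • v = v' := by
                    rw [mul_smul, mul_smul, ← hv', haa]
                  apply ihc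
                  show v' = 0
                  rw [← hvv]
                  apply sand_zero
                  intro σ
                  by_cases hfixσ : ∀ j : ℕ+, (j:ℕ) < (m:ℕ) → σ.1 j = j
                  · -- fixes prefix: factor through alpha m ^ (c+1)
                    set ρ := (alpha m)^c * σ * (alpha m)^c with hρ
                    have hρfix : ∀ j : ℕ+, (j:ℕ) < (m:ℕ) → ρ.1 j = j := by
                      intro j hj
                      show ((alpha m)^c * σ * (alpha m)^c : IncM).1 j = j
                      rw [incm_mul_apply, incm_mul_apply, alpha_pow_small m c j hj,
                        hfixσ j hj, alpha_pow_small m c j hj]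
                    have hρbig : (m:ℕ) + (c+1) ≤ (ρ.1 m : ℕ) := by
                      have e0 : (((alpha m ^ c : IncM)).1 m : ℕ) = (m:ℕ) + c := by
                        rw [alpha_pow_val, if_neg (by omega)]
                      have e1 := le_apply_nat σ ((alpha m ^ c : IncM).1 m)
                      have e2 : ((ρ.1 m : ℕ)) =
                          (((alpha m ^ c : IncM)).1 (σ.1 ((alpha m ^ c : IncM).1 m)) : ℕ) := rfl
                      rw [e2, alpha_pow_val]
                      split_ifs with hsplit
                      · omega
                      · omega
                    obtain ⟨τ, -, -, heq⟩ := exists_factor ρ m (c+1) hρfix hρbig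
                    show ofInc k ρ • v = 0
                    rw [heq, of_mul_smul, hzero, smul_zero]
                  · push_neg at hfixσ
                    obtain ⟨j, hjm, hjne⟩ := hfixσ
                    have hjgt : (j:ℕ) < (σ.1 j : ℕ) :=
                      lt_of_le_of_ne (le_apply_nat σ j)
                        (fun h => hjne (PNat.coe_injective h.symm))
                    have hmv : ((alpha m)^c * σ * (alpha m)^c : IncM).1 j ≠ j := by
                      have e0 : ((alpha m)^c * σ * (alpha m)^c : IncM).1 j
                          = (alpha m ^ c : IncM).1 (σ.1 j) := by
                        show (alpha m ^ c : IncM).1 (σ.1 ((alpha m ^ c : IncM).1 j)) = _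
                        rw [alpha_pow_small m c j hjm]
                      have e1 : ((alpha m ^ c : IncM).1 (σ.1 j) : ℕ) =
                          if ((σ.1 j : ℕ)) < (m:ℕ) then (σ.1 j : ℕ) else (σ.1 j : ℕ) + c :=
                        alpha_pow_val m c (σ.1 j)
                      intro hcon
                      rw [e0] at hcon
                      have := congrArg (fun x : ℕ+ => (x:ℕ)) hcon
                      simp only [e1] at this
                      split_ifs at this <;> omega
                    exact smul_eq_zero_of_moves v ((m:ℕ) - 1)
                      (fun j' hj' => hkill j' (by have := m.pos; omega))
                      _ j (by have := m.pos; omega) hmv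
          -- Now show v is fixed by all alpha j, j ≥ m, concluding with n = m - 1
          set c := N + 1 - (m:ℕ) with hc
          set v' := ofInc k ((alpha m)^c) • v with hv'
          obtain ⟨a, haa⟩ := exists_smul_eq' hsimple v' (hpow c) v
          have hNpos : 0 < N + 1 := Nat.succ_pos N
          set t : ℕ+ := ⟨N + 1, hNpos⟩ with ht
          have htval : (t:ℕ) = N + 1 := rfl
          have hv_eq : ∀ g : IncM, ofInc k g • v = (ofInc k g * a * ofInc k ((alpha m)^c)) • v := by
            intro g
            rw [mul_smul, mul_smul, ← hv', haa]
          have hkey : ∀ j : ℕ+, (m:ℕ) ≤ (j:ℕ) → (j:ℕ) ≤ N + 1 →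
              ofInc k (alpha j) • v = v := by
            intro j hj1 hj2
            have step : ofInc k (alpha j) • v = ofInc k (alpha t) • v := by
              rw [hv_eq (alpha j), hv_eq (alpha t)]
              apply sand_eq
              intro σ
              by_cases hfixσ : ∀ j' : ℕ+, (j':ℕ) < (m:ℕ) → σ.1 j' = j'
              · apply smul_congr_of_agree v N hfix
                intro p hp
                by_cases hpm : (p:ℕ) < (m:ℕ)
                · show (alpha j).1 (σ.1 ((alpha m ^ c : IncM).1 p))
                      = (alpha t).1 (σ.1 ((alpha m ^ c : IncM).1 p))
                  rw [alpha_pow_small m c p hpm, hfixσ p hpm]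
                  have hj : (alpha j).1 p = p := by
                    apply PNat.coe_injective
                    have := alpha_apply' j p
                    rw [this, if_pos (by rw [← PNat.coe_lt_coe]; omega)]
                  have htp : (alpha t).1 p = p := by
                    apply PNat.coe_injective
                    rw [alpha_apply' t p, if_pos (by rw [← PNat.coe_lt_coe]; omega)]
                  rw [hj, htp]
                · -- m ≤ p ≤ N
                  show (alpha j).1 (σ.1 ((alpha m ^ c : IncM).1 p))
                      = (alpha t).1 (σ.1 ((alpha m ^ c : IncM).1 p))
                  have e0 : (((alpha m ^ c : IncM)).1 p : ℕ) = (p:ℕ) + c := by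
                    rw [alpha_pow_val, if_neg hpm]
                  have e1 := le_apply_nat σ ((alpha m ^ c : IncM).1 p)
                  set q := σ.1 ((alpha m ^ c : IncM).1 p) with hq
                  have hqbig : N + 1 ≤ (q:ℕ) := by omega
                  apply PNat.coe_injective
                  rw [alpha_apply' j q, alpha_apply' t q,
                    if_neg (by rw [← PNat.coe_lt_coe]; omega),
                    if_neg (by rw [← PNat.coe_lt_coe]; omega)]
              · push_neg at hfixσ
                obtain ⟨j', hj'm, hj'ne⟩ := hfixσ
                have hj'gt : (j':ℕ) < (σ.1 j' : ℕ) :=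
                  lt_of_le_of_ne (le_apply_nat σ j')
                    (fun h => hj'ne (PNat.coe_injective h.symm))
                have hmv : ∀ u : ℕ+, (m:ℕ) ≤ (u:ℕ) →
                    ((alpha u) * σ * (alpha m)^c : IncM).1 j' ≠ j' := by
                  intro u hu
                  have e0 : ((alpha u) * σ * (alpha m)^c : IncM).1 j'
                      = (alpha u).1 (σ.1 j') := by
                    show (alpha u).1 (σ.1 ((alpha m ^ c : IncM).1 j')) = _
                    rw [alpha_pow_small m c j' hj'm]
                  intro hcon
                  rw [e0] at hcon
                  have e1 := congrArg (fun x : ℕ+ => (x:ℕ)) hcon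
                  have e2 := alpha_apply' u (σ.1 j')
                  have e3 := congrArg (fun x : ℕ+ => (x:ℕ)) e2
                  rw [e3] at e1
                  split_ifs at e1 <;> (push_cast at e1; omega)
                rw [smul_eq_zero_of_moves v ((m:ℕ) - 1)
                    (fun j'' hj'' => hkill j'' (by have := m.pos; omega))
                    _ j' (by have := m.pos; omega) (hmv j hj1),
                  smul_eq_zero_of_moves v ((m:ℕ) - 1)
                    (fun j'' hj'' => hkill j'' (by have := m.pos; omega))
                    _ j' (by have := m.pos; omega) (hmv t (by omega))]
            rw [step]
            exact hfix t (by omega)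
          refine ⟨(m:ℕ) - 1, v, hv, ?_, ?_⟩
          · intro j hj
            exact hkill j (by have := m.pos; omega)
          · intro j hj
            by_cases hjN : (j:ℕ) ≤ N + 1
            · exact hkey j (by have := m.pos; omega) hjN
            · exact hfix j (by omega)

end ModuleAux

/-- Every simple smooth `k[I]`-module is isomorphic to `B^n` for
some `n ∈ ℕ`. -/
theorem simple_smooth_module_classification (k : Type*) [Field k]
    (M : Type*) [AddCommGroup M] [Module (IncAlg k) M]
    (hsm : IsSmoothMod k M) (hsimple : IsSimpleModule (IncAlg k) M) :
    ∃ n : ℕ, Nonempty (M ≃ₗ[IncAlg k] BMod k n) := by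
  classical
  haveI := hsimple
  obtain ⟨n, z, hz0, hkill, hfix⟩ := exists_eigenvector hsm hsimple
  have hfixall : ∀ σ : IncM, fixesNat σ n → ofInc k σ • z = z := by
    intro σ hσ
    have hfixes : ∀ j : ℕ+, (j:ℕ) ≤ n → σ.1 j = j := by
      intro j hj
      rcases Nat.eq_zero_or_pos n with h0 | hpos
      · exact absurd hj (by have := j.pos; omega)
      · have hn : σ.1 ⟨n, hpos⟩ = ⟨n, hpos⟩ := hσ hpos
        have h1 := diff_le σ (n - (j:ℕ)) j ⟨n, hpos⟩
          (by show n = (j:ℕ) + (n - (j:ℕ)); omega)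
        have h2 := le_apply_nat σ j
        have h3 : (σ.1 ⟨n, hpos⟩ : ℕ) = n := by rw [hn]; rfl
        exact PNat.coe_injective (by omega)
    obtain ⟨l, N, hl⟩ := σ.2.2
    exact smul_eq_of_fixes z n hfix l σ N hl hfixes
  have hkillall : ∀ σ : IncM, ¬ fixesNat σ n → ofInc k σ • z = 0 := by
    intro σ hσ
    have hσ' : ¬ ∀ h : 0 < n, σ.1 (⟨n, h⟩ : ℕ+) = (⟨n, h⟩ : ℕ+) := hσ
    obtain ⟨hpos, hne⟩ := not_forall.mp hσ'
    exact smul_eq_zero_of_moves z n hkill σ ⟨n, hpos⟩ (le_refl n) hne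
  have key : ∀ (a : IncAlg k) (x : k),
      (MonoidAlgebra.single (1:IncM) (((bRep k n).asAlgebraHom a) x) : IncAlg k) • z
        = a • ((MonoidAlgebra.single (1:IncM) x : IncAlg k) • z) := by
    intro a
    induction a using MonoidAlgebra.induction with
    | zero => intro x; simp
    | single_add σ c a hσs hc ih =>
        intro x
        rw [map_add, LinearMap.add_apply, MonoidAlgebra.single_add, add_smul, add_smul, ih]
        congr 1
        rw [Representation.asAlgebraHom_single]
        have hb : ((c • (bRep k n) σ : k →ₗ[k] k)) x
            = c * (if fixesNat σ n then x else 0) := by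
          rw [LinearMap.smul_apply]
          have hrep : ((bRep k n) σ) x = (if fixesNat σ n then x else 0) := by
            show (if fixesNat σ n then (1 : k →ₗ[k] k) else 0) x = _
            split_ifs <;> rfl
          rw [hrep, smul_eq_mul]
        rw [hb]
        have hr : (MonoidAlgebra.single σ c : IncAlg k) •
              ((MonoidAlgebra.single (1:IncM) x : IncAlg k) • z)
            = (MonoidAlgebra.single (1:IncM) (c*x) : IncAlg k) • (ofInc k σ • z) := by
          have hofs : ofInc k σ = (MonoidAlgebra.single σ 1 : IncAlg k) :=
            MonoidAlgebra.of_apply k IncM σ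
          rw [← mul_smul, ← mul_smul, MonoidAlgebra.single_mul_single, mul_one, hofs,
            MonoidAlgebra.single_mul_single, one_mul, mul_one]
        rw [hr]
        by_cases hfx : fixesNat σ n
        · rw [if_pos hfx, hfixall σ hfx]
        · rw [if_neg hfx, hkillall σ hfx, mul_zero, MonoidAlgebra.single_zero, zero_smul, smul_zero]
  let f : BMod k n →ₗ[IncAlg k] M :=
    { toFun := fun c =>
        (MonoidAlgebra.single (1:IncM) ((bRep k n).asModuleEquiv c) : IncAlg k) • z
      map_add' := fun c1 c2 => by
        show (MonoidAlgebra.single (1:IncM) ((bRep k n).asModuleEquiv (c1 + c2)) : IncAlg k) • z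
          = (MonoidAlgebra.single (1:IncM) ((bRep k n).asModuleEquiv c1) : IncAlg k) • z
            + (MonoidAlgebra.single (1:IncM) ((bRep k n).asModuleEquiv c2) : IncAlg k) • z
        rw [map_add, MonoidAlgebra.single_add, add_smul]
      map_smul' := fun a c => by
        show (MonoidAlgebra.single (1:IncM) ((bRep k n).asModuleEquiv (a • c)) : IncAlg k) • z
          = a • ((MonoidAlgebra.single (1:IncM) ((bRep k n).asModuleEquiv c) : IncAlg k) • z)
        rw [Representation.asModuleEquiv_map_smul]
        exact key a ((bRep k n).asModuleEquiv c) }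
  have hfc : ∀ c, f c =
      (MonoidAlgebra.single (1:IncM) ((bRep k n).asModuleEquiv c) : IncAlg k) • z :=
    fun c => rfl
  have hinj : Function.Injective f := by
    intro c1 c2 h12
    by_contra hne12
    have hd : (bRep k n).asModuleEquiv c1 - (bRep k n).asModuleEquiv c2 ≠ 0 := by
      intro h
      exact hne12 ((bRep k n).asModuleEquiv.injective (sub_eq_zero.mp h))
    set d := (bRep k n).asModuleEquiv c1 - (bRep k n).asModuleEquiv c2 with hdd
    have hsub : (MonoidAlgebra.single (1:IncM) d : IncAlg k)
        = MonoidAlgebra.single (1:IncM) ((bRep k n).asModuleEquiv c1)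
          - MonoidAlgebra.single (1:IncM) ((bRep k n).asModuleEquiv c2) := by
      rw [hdd]
      exact MonoidAlgebra.single_sub _ _ _
    have h3 : (MonoidAlgebra.single (1:IncM) d : IncAlg k) • z = 0 := by
      rw [hsub, sub_smul, ← hfc c1, ← hfc c2, h12, sub_self]
    apply hz0
    have h4 : (MonoidAlgebra.single (1:IncM) d⁻¹ : IncAlg k) •
        ((MonoidAlgebra.single (1:IncM) d : IncAlg k) • z) = z := by
      rw [← mul_smul, MonoidAlgebra.single_mul_single, one_mul, inv_mul_cancel₀ hd,
        ← MonoidAlgebra.one_def, one_smul]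
    rw [h3, smul_zero] at h4
    exact h4.symm
  have hzr : f ((bRep k n).asModuleEquiv.symm 1) = z := by
    rw [hfc, LinearEquiv.apply_symm_apply, ← MonoidAlgebra.one_def, one_smul]
  have hsurj : Function.Surjective f := by
    rcases eq_bot_or_eq_top (LinearMap.range f) with hb | ht
    · exfalso
      apply hz0
      have hm : f ((bRep k n).asModuleEquiv.symm 1) ∈ LinearMap.range f :=
        LinearMap.mem_range_self f _
      rw [hb, Submodule.mem_bot] at hm
      rw [← hzr]
      exact hm
    · exact LinearMap.range_eq_top.mp ht
  exact ⟨n, ⟨(LinearEquiv.ofBijective f ⟨hinj, hsurj⟩).symm⟩⟩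

end
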